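/- If p chords are added to the cycle C_n (n ≥ 3), then the total number of cycles in the resulting graph is at most 2^(p+1) - 1. -/

import Mathlib

open SimpleGraph

/-- `e` is a chord of the cycle graph `Cₙ`: an edge between two distinct,
non-adjacent vertices of the cycle. -/
def IsChord (n : ℕ) (e : Sym2 (Fin n)) : Prop :=
  ¬ e.IsDiag ∧ e ∉ (cycleGraph n).edgeSet

/-- The set of edge sets of cycles of a graph `G`; this identifies a cycle
with its edge set, so that each cycle is counted exactly once. -/
def cycleEdgeSets {V : Type*} [DecidableEq V] (G : SimpleGraph V) : Set (Finset (Sym2 V)) :=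
  {E | ∃ (v : V) (w : G.Walk v v), w.IsCycle ∧ w.edges.toFinset = E}

section CycleSpaceAux
open Finset

open SimpleGraph

lemma walk_parity {V : Type*} [DecidableEq V] {G : SimpleGraph V} {a b : V}
    (w : G.Walk a b) (u : V) :
    ((w.edges.countP (fun e => decide (u ∈ e))) : ZMod 2)
      = (if u = a then 1 else 0) + (if u = b then 1 else 0) := by
  induction w with
  | nil =>
      simp only [Walk.edges_nil, List.countP_nil, Nat.cast_zero]
      split <;> decide
  | @cons a c b h p ih =>
      rw [Walk.edges_cons, List.countP_cons]
      push_cast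
      rw [ih]
      have hac : a ≠ c := h.ne
      by_cases h1 : u = a <;> by_cases h2 : u = c <;>
        simp [h1, h2, Sym2.mem_iff, hac, Ne.symm hac] <;>
        split <;> decide

open SimpleGraph Finset

noncomputable def incMap {V : Type*} [DecidableEq V] (T : Finset (Sym2 V)) :
    ((↥T → ZMod 2) →ₗ[ZMod 2] (V → ZMod 2)) where
  toFun x v := ∑ e : ↥T, x e * (if v ∈ (e : Sym2 V) then 1 else 0)
  map_add' x y := by
    funext v
    simp only [Pi.add_apply, add_mul]
    rw [Finset.sum_add_distrib]
  map_smul' c x := by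
    funext v
    simp [Finset.mul_sum, mul_assoc]

lemma incMap_single {V : Type*} [DecidableEq V] (T : Finset (Sym2 V))
    (e : ↥T) :
    incMap T (Pi.single e 1) = fun v => if v ∈ (e : Sym2 V) then 1 else 0 := by
  funext v
  simp only [incMap, LinearMap.coe_mk, AddHom.coe_mk]
  rw [Finset.sum_eq_single e]
  · simp
  · intro b _ hb
    simp [Pi.single_apply, hb]
  · simp

lemma indicator_eq_single_add_single {V : Type*} [DecidableEq V] {a b : V} (hab : a ≠ b) :
    (fun v => if v ∈ (s(a, b) : Sym2 V) then (1 : ZMod 2) else 0)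
      = Pi.single a 1 + Pi.single b 1 := by
  funext v
  simp only [Sym2.mem_iff, Pi.add_apply, Pi.single_apply]
  by_cases h1 : v = a <;> by_cases h2 : v = b
  · exact absurd (h1.symm.trans h2) hab
  all_goals simp_all

lemma linIndep_path (k : ℕ) :
    LinearIndependent (ZMod 2) (fun i : Fin k =>
      (Pi.single i.castSucc 1 + Pi.single i.succ 1 : Fin (k+1) → ZMod 2)) := by
  rw [Fintype.linearIndependent_iff]
  intro c hc
  have key : ∀ j : Fin k, c j + (if h : (j:ℕ)+1 < k then c ⟨(j:ℕ)+1, h⟩ else 0) = 0 := by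
    intro j
    have h0 := congrFun hc j.succ
    simp only [Finset.sum_apply, Pi.smul_apply, Pi.add_apply, Pi.single_apply,
      smul_eq_mul, Pi.zero_apply] at h0
    have hterm : ∀ i : Fin k,
        c i * ((if j.succ = i.castSucc then (1:ZMod 2) else 0)
            + (if j.succ = i.succ then 1 else 0))
        = (if j.succ = i.castSucc then c i else 0) + (if i = j then c i else 0) := by
      intro i
      have hsucc : (j.succ = i.succ) ↔ (i = j) := by
        constructor
        · intro h; exact (Fin.succ_inj.mp h.symm)
        · intro h; rw [h]
      simp only [hsucc]
      by_cases h1 : j.succ = i.castSucc <;> by_cases h2 : i = j <;>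
        simp [h1, h2, mul_add]
    rw [Finset.sum_congr rfl (fun i _ => hterm i), Finset.sum_add_distrib,
      Finset.sum_ite_eq' Finset.univ j c] at h0
    simp only [Finset.mem_univ, if_true] at h0
    by_cases hjk : (j:ℕ)+1 < k
    · have hcond : ∀ i : Fin k, (j.succ = i.castSucc) ↔ (i = ⟨(j:ℕ)+1, hjk⟩) := by
        intro i
        rw [Fin.ext_iff, Fin.ext_iff]
        simp only [Fin.val_succ, Fin.coe_castSucc]
        omega
      simp only [hcond] at h0
      rw [Finset.sum_ite_eq' Finset.univ (⟨(j:ℕ)+1, hjk⟩ : Fin k) c] at h0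
      simp only [Finset.mem_univ, if_true] at h0
      rw [dif_pos hjk, add_comm]
      exact h0
    · have hcond : ∀ i : Fin k, ¬(j.succ = i.castSucc) := by
        intro i h
        have := congrArg Fin.val h
        simp only [Fin.val_succ, Fin.coe_castSucc] at this
        omega
      simp only [hcond, if_false, Finset.sum_const_zero, zero_add] at h0
      rw [dif_neg hjk, add_zero]
      exact h0
  have zero : ∀ t : ℕ, ∀ j : Fin k, k ≤ (j:ℕ) + t → c j = 0 := by
    intro t
    induction t with
    | zero => intro j hj; exact absurd hj (by omega)
    | succ t ih =>
        intro j hj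
        have hk := key j
        by_cases hjk : (j:ℕ)+1 < k
        · rw [dif_pos hjk] at hk
          rw [ih ⟨(j:ℕ)+1, hjk⟩ (by simp; omega), add_zero] at hk
          exact hk
        · rw [dif_neg hjk, add_zero] at hk
          exact hk
  intro i
  exact zero k i (by omega)

end CycleSpaceAux

/-- If `p` chords are added to `Cₙ` (`n ≥ 3`), the resulting graph has at
most `2^(p+1) - 1` cycles. -/
theorem stmt_1 (n p : ℕ) (hn : 3 ≤ n) (S : Finset (Sym2 (Fin n)))
    (hchords : ∀ e ∈ S, IsChord n e) (hp : S.card = p) :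
    (cycleEdgeSets (cycleGraph n ⊔ fromEdgeSet ↑S)).ncard ≤ 2 ^ (p + 1) - 1 := by
  classical
  obtain ⟨m, rfl⟩ : ∃ m, n = m + 3 := ⟨n - 3, by omega⟩
  haveI : Fact (Nat.Prime 2) := ⟨Nat.prime_two⟩
  set G : SimpleGraph (Fin (m+3)) := cycleGraph (m+3) ⊔ fromEdgeSet ↑S with hG
  set T : Finset (Sym2 (Fin (m+3))) := (cycleGraph (m+3)).edgeFinset ∪ S with hT
  -- Edges of `G` lie in `T`
  have hGT : G.edgeSet ⊆ ↑T := by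
    rw [hG, edgeSet_sup, edgeSet_fromEdgeSet]
    intro e he
    rcases he with he | he
    · exact Finset.mem_coe.mpr (Finset.mem_union_left _ (mem_edgeFinset.mpr he))
    · exact Finset.mem_coe.mpr (Finset.mem_union_right _ he.1)
  -- Edge sets of cycles lie in `T`
  have hET : ∀ E ∈ cycleEdgeSets G, E ⊆ T := by
    rintro E ⟨v, w, hw, rfl⟩ e he
    rw [List.mem_toFinset] at he
    exact hGT (w.edges_subset_edgeSet he)
  -- `T` has at most `m + 3 + p` elements
  have hcardC : (cycleGraph (m+3)).edgeFinset.card ≤ m + 3 := by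
    have hsub : (cycleGraph (m+3)).edgeFinset ⊆
        Finset.image (fun i : Fin (m+3) => s(i, i+1)) Finset.univ := by
      intro e he
      rw [mem_edgeFinset] at he
      induction e using Sym2.ind with
      | _ u v =>
        rw [mem_edgeSet, cycleGraph_adj] at he
        rcases he with h | h
        · refine Finset.mem_image.mpr ⟨v, Finset.mem_univ _, ?_⟩
          have : u = v + 1 := by
            rw [← h]; abel
          rw [this, Sym2.eq_swap]
        · refine Finset.mem_image.mpr ⟨u, Finset.mem_univ _, ?_⟩
          have : v = u + 1 := by
            rw [← h]; abel
          rw [this]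
    calc (cycleGraph (m+3)).edgeFinset.card
        ≤ (Finset.image (fun i : Fin (m+3) => s(i, i+1)) Finset.univ).card :=
          Finset.card_le_card hsub
      _ ≤ (Finset.univ : Finset (Fin (m+3))).card := Finset.card_image_le
      _ = m + 3 := by simp
  have hcardT : T.card ≤ (m+3) + p := by
    calc T.card ≤ (cycleGraph (m+3)).edgeFinset.card + S.card := Finset.card_union_le _ _
      _ ≤ (m+3) + p := by omega
  -- The incidence map
  set φ := incMap T with hφ
  -- The path edges are in `T`
  have hedge : ∀ i : Fin (m+2), s(Fin.castSucc i, Fin.succ i) ∈ T := by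
    intro i
    apply Finset.mem_union_left
    rw [mem_edgeFinset, mem_edgeSet]
    refine cycleGraph_adj.mpr (Or.inr ?_)
    rw [← Fin.coeSucc_eq_succ]
    abel
  -- The range of φ contains the path vectors
  have hrange : ∀ i : Fin (m+2),
      (Pi.single (Fin.castSucc i) 1 + Pi.single (Fin.succ i) 1 : Fin (m+3) → ZMod 2)
        ∈ LinearMap.range φ := by
    intro i
    refine ⟨Pi.single (⟨_, hedge i⟩ : ↥T) 1, ?_⟩
    rw [hφ, incMap_single]
    exact indicator_eq_single_add_single (Fin.castSucc_lt_succ (i := i)).ne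
  have hspan : Submodule.span (ZMod 2) (Set.range (fun i : Fin (m+2) =>
      (Pi.single (Fin.castSucc i) 1 + Pi.single (Fin.succ i) 1 : Fin (m+3) → ZMod 2)))
      ≤ LinearMap.range φ := by
    rw [Submodule.span_le]
    rintro _ ⟨i, rfl⟩
    exact hrange i
  have hrk : m + 2 ≤ Module.finrank (ZMod 2) (LinearMap.range φ) := by
    have h1 := finrank_span_eq_card (R := ZMod 2) (linIndep_path (m+2))
    have h2 := Submodule.finrank_mono hspan
    rw [h1] at h2
    simpa using h2
  have hnull := LinearMap.finrank_range_add_finrank_ker φ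
  have hdom : Module.finrank (ZMod 2) (↥T → ZMod 2) = T.card := by
    rw [Module.finrank_pi]
    simp
  have hkerrk : Module.finrank (ZMod 2) (LinearMap.ker φ) ≤ p + 1 := by
    rw [hdom] at hnull
    omega
  haveI : Fintype ↥(LinearMap.ker φ) := Fintype.ofFinite _
  have hcardker : Nat.card ↥(LinearMap.ker φ) ≤ 2 ^ (p+1) := by
    rw [Nat.card_eq_fintype_card, Module.card_eq_pow_finrank (K := ZMod 2)]
    have h2 : Fintype.card (ZMod 2) = 2 := by simp
    rw [h2]
    exact Nat.pow_le_pow_right (by norm_num) hkerrk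
  -- the injection
  set f : Finset (Sym2 (Fin (m+3))) → (↥T → ZMod 2) :=
    fun E e => if (e : Sym2 (Fin (m+3))) ∈ E then 1 else 0 with hf
  have hval : ∀ (E : Finset (Sym2 (Fin (m+3)))), E ⊆ T → ∀ v : Fin (m+3),
      φ (f E) v = (((E.filter (fun e => v ∈ e)).card : ℕ) : ZMod 2) := by
    intro E hE v
    have : φ (f E) v
        = ∑ e : ↥T, (if (e : Sym2 (Fin (m+3))) ∈ E then (1 : ZMod 2) else 0)
            * (if v ∈ (e : Sym2 (Fin (m+3))) then 1 else 0) := rfl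
    rw [this]
    have h1 : ∀ e : ↥T, (if (e : Sym2 (Fin (m+3))) ∈ E then (1 : ZMod 2) else 0)
        * (if v ∈ (e : Sym2 (Fin (m+3))) then 1 else 0)
        = (if (e : Sym2 (Fin (m+3))) ∈ E ∧ v ∈ (e : Sym2 (Fin (m+3))) then 1 else 0) := by
      intro e
      by_cases h1 : (e : Sym2 (Fin (m+3))) ∈ E <;>
        by_cases h2 : v ∈ (e : Sym2 (Fin (m+3))) <;> simp [h1, h2]
    rw [Finset.sum_congr rfl (fun e _ => h1 e),
      Finset.sum_coe_sort T (fun e => if e ∈ E ∧ v ∈ e then (1 : ZMod 2) else 0),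
      Finset.sum_boole]
    congr 2
    ext e
    simp only [Finset.mem_filter]
    constructor
    · rintro ⟨_, h, h'⟩; exact ⟨h, h'⟩
    · rintro ⟨h, h'⟩; exact ⟨hE h, h, h'⟩
  have hmaps : ∀ E ∈ cycleEdgeSets G,
      f E ∈ ((LinearMap.ker φ : Submodule (ZMod 2) _) : Set (↥T → ZMod 2)) \ {0} := by
    intro E hEmem
    obtain ⟨v, w, hw, hEw⟩ := hEmem
    have hE : E ⊆ T := hET E ⟨v, w, hw, hEw⟩
    constructor
    · -- in the kernel
      rw [SetLike.mem_coe, LinearMap.mem_ker]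
      funext u
      simp only [Pi.zero_apply]
      rw [hval E hE u]
      have hcount : (E.filter (fun e => u ∈ e)).card
          = w.edges.countP (fun e => decide (u ∈ e)) := by
        have hfe : E.filter (fun e => u ∈ e)
            = (w.edges.filter (fun e => decide (u ∈ e))).toFinset := by
          ext e
          simp [← hEw]
        rw [hfe, List.toFinset_card_of_nodup (hw.edges_nodup.filter _),
          List.countP_eq_length_filter]
      rw [hcount, walk_parity w u]
      split <;> rfl
    · -- nonzero
      intro h0
      have hlen : w.edges ≠ [] := by
        have h3 := hw.three_le_length
        intro hnil
        rw [← w.length_edges, hnil] at h3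
        simp at h3
      obtain ⟨e, he⟩ := List.exists_mem_of_ne_nil _ hlen
      have heE : e ∈ E := by rw [← hEw, List.mem_toFinset]; exact he
      have := congrFun h0 ⟨e, hE heE⟩
      rw [hf] at this
      simp only [heE, if_true, Pi.zero_apply] at this
      exact one_ne_zero this
  have hinj : Set.InjOn f (cycleEdgeSets G) := by
    intro E hE E' hE' hff
    have h1 : E ⊆ T := hET E hE
    have h2 : E' ⊆ T := hET E' hE'
    ext e
    constructor
    · intro he
      have := congrFun hff ⟨e, h1 he⟩
      simp only [hf, he, if_true] at this
      by_contra he'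
      rw [if_neg he'] at this
      exact one_ne_zero this
    · intro he
      have := congrFun hff ⟨e, h2 he⟩
      simp only [hf, he, if_true] at this
      by_contra he'
      rw [if_neg he'] at this
      exact one_ne_zero this.symm
  -- final counting
  have hfin : (((LinearMap.ker φ : Submodule (ZMod 2) _) : Set (↥T → ZMod 2)) \ {0}).Finite :=
    Set.toFinite _
  calc (cycleEdgeSets G).ncard
      ≤ (((LinearMap.ker φ : Submodule (ZMod 2) _) : Set (↥T → ZMod 2)) \ {0}).ncard :=
        Set.ncard_le_ncard_of_injOn f hmaps hinj hfin
    _ = ((LinearMap.ker φ : Submodule (ZMod 2) _) : Set (↥T → ZMod 2)).ncard - 1 := by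
        rw [Set.ncard_diff_singleton_of_mem (by simp)]
    _ = Nat.card ↥(LinearMap.ker φ) - 1 := by
        rw [← Nat.card_coe_set_eq]
        rfl
    _ ≤ 2 ^ (p + 1) - 1 := Nat.sub_le_sub_right hcardker 1
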